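/- For every tree T with at least 3 vertices, there exists an independent ve-dominating set S of T with |S| = i_ve(T) such that S contains no leaf of T. -/

import Mathlib

variable {V : Type*} [Fintype V] [DecidableEq V]

/-- A vertex `u` ve-dominates an edge `e` if `e` is incident to some vertex of `N[u]`. -/
def veDominates (G : SimpleGraph V) (u : V) (e : Sym2 V) : Prop :=
  ∃ x ∈ e, x = u ∨ G.Adj u x

/-- `S` is a ve-dominating set: every edge is ve-dominated by some vertex of `S`. -/
def IsVEDomSet (G : SimpleGraph V) (S : Finset V) : Prop :=
  ∀ e ∈ G.edgeSet, ∃ u ∈ S, veDominates G u e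

/-- `S` is an independent set. -/
def IsIndepSet (G : SimpleGraph V) (S : Finset V) : Prop :=
  ∀ u ∈ S, ∀ v ∈ S, ¬ G.Adj u v

/-- The ve-domination number `γ_ve(G)`. -/
noncomputable def gammaVE (G : SimpleGraph V) : ℕ :=
  sInf {n | ∃ S : Finset V, IsVEDomSet G S ∧ S.card = n}

/-- The independent ve-domination number `i_ve(G)`. -/
noncomputable def iVE (G : SimpleGraph V) : ℕ :=
  sInf {n | ∃ S : Finset V, IsVEDomSet G S ∧ IsIndepSet G S ∧ S.card = n}

/-- Auxiliary: some independent ve-dominating set exists (a maximum independent set works). -/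
lemma exists_indep_vedom (G : SimpleGraph V) : ∃ S : Finset V, IsVEDomSet G S ∧ IsIndepSet G S := by
  classical
  obtain ⟨S, hSmem, hmax⟩ := Finset.exists_max_image
    ((Finset.univ : Finset (Finset V)).filter fun S => IsIndepSet G S)
    Finset.card ⟨∅, Finset.mem_filter.mpr ⟨Finset.mem_univ _, by simp [IsIndepSet]⟩⟩
  simp only [Finset.mem_filter, Finset.mem_univ, true_and] at hSmem
  refine ⟨S, ?_, hSmem⟩
  intro e he
  induction e using Sym2.inductionOn with
  | hf a b =>
    rw [SimpleGraph.mem_edgeSet] at he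
    by_cases h : ∃ w ∈ S, w = a ∨ G.Adj w a
    · obtain ⟨w, hw, hwa⟩ := h
      exact ⟨w, hw, a, Sym2.mem_mk_left a b, by
        rcases hwa with h | h
        · exact Or.inl h.symm
        · exact Or.inr h⟩
    · push_neg at h
      exfalso
      have haS : a ∉ S := fun haS => (h a haS).1 rfl
      have hind : IsIndepSet G (insert a S) := by
        intro x hx y hy
        rcases Finset.mem_insert.mp hx with hxa | hxS
        · rcases Finset.mem_insert.mp hy with hya | hyS
          · rw [hxa, hya]; exact G.irrefl
          · rw [hxa]; intro hadj; exact (h y hyS).2 hadj.symm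
        · rcases Finset.mem_insert.mp hy with hya | hyS
          · rw [hya]; intro hadj; exact (h x hxS).2 hadj
          · exact hSmem x hxS y hyS
      have := hmax (insert a S) (by simp [hind])
      rw [Finset.card_insert_of_notMem haS] at this
      omega

/-- For every tree `T` with at least 3 vertices, there exists a minimum independent
ve-dominating set containing no leaf. -/
theorem stmt1 (G : SimpleGraph V) [DecidableRel G.Adj] (hT : G.IsTree)
    (h3 : 3 ≤ Fintype.card V) :
    ∃ S : Finset V, IsVEDomSet G S ∧ IsIndepSet G S ∧ S.card = iVE G ∧
      ∀ v ∈ S, G.degree v ≠ 1 := by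
  classical
  obtain ⟨S0, hS0dom, hS0ind⟩ := exists_indep_vedom G
  -- the defining set of iVE is nonempty, hence the infimum is attained
  have hne : {n | ∃ S : Finset V, IsVEDomSet G S ∧ IsIndepSet G S ∧ S.card = n}.Nonempty :=
    ⟨S0.card, S0, hS0dom, hS0ind, rfl⟩
  have hiVEmem := Nat.sInf_mem hne
  -- now minimize the number of leaves among minimum independent ve-dom sets
  set leafct : Finset V → ℕ := fun S => (S.filter fun v => G.degree v = 1).card with hleafct
  have hLne : {k | ∃ S : Finset V, IsVEDomSet G S ∧ IsIndepSet G S ∧ S.card = iVE G ∧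
      leafct S = k}.Nonempty := by
    obtain ⟨S, h1, h2, h3'⟩ := hiVEmem
    exact ⟨leafct S, S, h1, h2, h3', rfl⟩
  obtain ⟨S, hSdom, hSind, hScard, hSleaf⟩ := Nat.sInf_mem hLne
  refine ⟨S, hSdom, hSind, hScard, ?_⟩
  intro v hv hdeg
  -- v is a leaf in S; get its unique neighbor u
  obtain ⟨u, hu⟩ := Finset.card_eq_one.mp (by rwa [SimpleGraph.degree] at hdeg)
  have hadj : G.Adj v u := by
    rw [← SimpleGraph.mem_neighborFinset, hu]; exact Finset.mem_singleton_self u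
  have huniq : ∀ x, G.Adj v x → x = u := by
    intro x hx
    have : x ∈ G.neighborFinset v := (SimpleGraph.mem_neighborFinset G v x).mpr hx
    rw [hu] at this; exact Finset.mem_singleton.mp this
  have huS : u ∉ S := fun huS => hSind v hv u huS hadj
  -- u is not a leaf
  have hudeg : G.degree u ≠ 1 := by
    intro hud
    obtain ⟨z, hz⟩ := Finset.card_eq_one.mp (by rwa [SimpleGraph.degree] at hud)
    have hzv : z = v := by
      have : v ∈ G.neighborFinset u := (SimpleGraph.mem_neighborFinset G u v).mpr hadj.symm
      rw [hz] at this; exact (Finset.mem_singleton.mp this).symm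
    rw [hzv] at hz
    -- get a third vertex
    have hss : ({u, v} : Finset V) ⊂ Finset.univ := by
      apply Finset.ssubset_univ_iff.mpr
      intro hcontra
      have : Fintype.card V ≤ 2 := by
        rw [← Finset.card_univ, ← hcontra]
        exact le_trans (Finset.card_insert_le _ _) (by simp)
      omega
    obtain ⟨w, _, hw⟩ := Finset.exists_of_ssubset hss
    simp only [Finset.mem_insert, Finset.mem_singleton, not_or] at hw
    -- connectivity: walk from w to v stays in {u, v}
    have key : ∀ (x y : V) (p : G.Walk x y), y = u ∨ y = v → x = u ∨ x = v := by
      intro x y p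
      induction p with
      | nil => exact id
      | @cons a b c hab p ih =>
        intro hy
        rcases ih hy with hbu | hbv
        · have ha : a ∈ G.neighborFinset b := (SimpleGraph.mem_neighborFinset G b a).mpr hab.symm
          rw [hbu, hz] at ha
          exact Or.inr (Finset.mem_singleton.mp ha)
        · have ha : a ∈ G.neighborFinset b := (SimpleGraph.mem_neighborFinset G b a).mpr hab.symm
          rw [hbv, hu] at ha
          exact Or.inl (Finset.mem_singleton.mp ha)
    obtain ⟨p⟩ := hT.isConnected.preconnected w v
    rcases key w v p (Or.inr rfl) with h | h
    · exact hw.1 h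
    · exact hw.2 h
  -- any edge ve-dominated by v contains u
  have hkey : ∀ e ∈ G.edgeSet, veDominates G v e → u ∈ e := by
    intro e he hd
    obtain ⟨x, hx, hx2⟩ := hd
    rcases hx2 with rfl | hvx
    · -- x = v ∈ e; the other endpoint is u
      induction e using Sym2.inductionOn with
      | hf a b =>
        rw [SimpleGraph.mem_edgeSet] at he
        rcases Sym2.mem_iff.mp hx with h1 | h2
        · have hbu : b = u := huniq b (h1 ▸ he)
          exact Sym2.mem_iff.mpr (Or.inr hbu.symm)
        · have hau : a = u := huniq a (h2 ▸ he.symm)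
          exact Sym2.mem_iff.mpr (Or.inl hau.symm)
    · have : x = u := huniq x hvx
      subst this; exact hx
  have hvS : S.Nonempty := ⟨v, hv⟩
  by_cases hB : ∃ w ∈ S.erase v, G.Adj u w
  · -- Case A: erase v still ve-dominates, contradicting minimality of cardinality
    obtain ⟨w, hwS, hwadj⟩ := hB
    have hdom' : IsVEDomSet G (S.erase v) := by
      intro e he
      obtain ⟨z, hzS, hzd⟩ := hSdom e he
      by_cases hzv : z = v
      · subst hzv
        exact ⟨w, hwS, u, hkey e he hzd, Or.inr hwadj.symm⟩
      · exact ⟨z, Finset.mem_erase.mpr ⟨hzv, hzS⟩, hzd⟩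
    have hind' : IsIndepSet G (S.erase v) := fun x hx y hy =>
      hSind x (Finset.mem_erase.mp hx).2 y (Finset.mem_erase.mp hy).2
    have hle : iVE G ≤ (S.erase v).card :=
      Nat.sInf_le ⟨S.erase v, hdom', hind', rfl⟩
    rw [Finset.card_erase_of_mem hv, hScard] at hle
    have h1 : 1 ≤ iVE G := by
      rw [← hScard]; exact Finset.card_pos.mpr hvS
    omega
  · -- Case B: swap v for u
    push_neg at hB
    set S' := insert u (S.erase v) with hS'
    have huE : u ∉ S.erase v := fun h => huS (Finset.mem_of_mem_erase h)
    have hcard' : S'.card = iVE G := by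
      rw [hS', Finset.card_insert_of_notMem huE, Finset.card_erase_of_mem hv, hScard]
      have h1 : 1 ≤ iVE G := by
        rw [← hScard]; exact Finset.card_pos.mpr hvS
      omega
    have hdom' : IsVEDomSet G S' := by
      intro e he
      obtain ⟨z, hzS, hzd⟩ := hSdom e he
      by_cases hzv : z = v
      · subst hzv
        exact ⟨u, Finset.mem_insert_self u _, u, hkey e he hzd, Or.inl rfl⟩
      · exact ⟨z, Finset.mem_insert_of_mem (Finset.mem_erase.mpr ⟨hzv, hzS⟩), hzd⟩
    have hind' : IsIndepSet G S' := by
      intro x hx y hy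
      rcases Finset.mem_insert.mp hx with hxa | hxS
      · rcases Finset.mem_insert.mp hy with hya | hyS
        · rw [hxa, hya]; exact G.irrefl
        · rw [hxa]; exact hB y hyS
      · rcases Finset.mem_insert.mp hy with hya | hyS
        · rw [hya]; intro hadj; exact hB x hxS hadj.symm
        · exact hSind x (Finset.mem_of_mem_erase hxS) y (Finset.mem_of_mem_erase hyS)
    -- leaf count strictly decreased
    have hfilt : S'.filter (fun x => G.degree x = 1) =
        (S.filter fun x => G.degree x = 1).erase v := by
      rw [hS', Finset.filter_insert, if_neg hudeg, Finset.filter_erase]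
    have hlt : leafct S' < leafct S := by
      rw [hleafct]
      simp only [hfilt]
      have hvf : v ∈ S.filter fun x => G.degree x = 1 :=
        Finset.mem_filter.mpr ⟨hv, hdeg⟩
      rw [Finset.card_erase_of_mem hvf]
      have := Finset.card_pos.mpr ⟨v, hvf⟩
      omega
    have hle : sInf {k | ∃ S : Finset V, IsVEDomSet G S ∧ IsIndepSet G S ∧ S.card = iVE G ∧
        leafct S = k} ≤ leafct S' :=
      Nat.sInf_le ⟨S', hdom', hind', hcard', rfl⟩
    rw [hSleaf] at hlt
    omega
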